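/- Let I ⊆ ℝ be a nonempty open interval, f : I → ℝ Jensen convex, and n ∈ ℕ with n ≥ 2. Then f((x₁+⋯+xₙ)/n) ≤ (1/n)∑_{i=1}^n f((x₁+⋯+xₙ−x_i)/(n−1)) for all x₁,…,xₙ ∈ I. -/

import Mathlib

open Finset

private lemma avg_mem (I : Set ℝ) (hconv : Convex ℝ I) (n : ℕ) (hn : 0 < n)
    (z : ℕ → ℝ) (hz : ∀ i < n, z i ∈ I) :
    (∑ i ∈ range n, z i) / n ∈ I := by
  have hn' : (0:ℝ) < n := by exact_mod_cast hn
  have := hconv.sum_mem (t := range n) (w := fun _ => (n:ℝ)⁻¹) (z := z)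
    (fun i _ => by positivity)
    (by simp [Finset.sum_const, Finset.card_range]; field_simp)
    (fun i hi => hz i (mem_range.mp hi))
  have heq : ∑ i ∈ range n, (n:ℝ)⁻¹ • z i = (∑ i ∈ range n, z i) / n := by
    simp [smul_eq_mul, ← Finset.mul_sum, div_eq_inv_mul]
  rwa [heq] at this

private lemma jensen_pow2 (I : Set ℝ) (hconv : Convex ℝ I) (f : ℝ → ℝ)
    (hJ : ∀ u ∈ I, ∀ v ∈ I, f ((u + v) / 2) ≤ (f u + f v) / 2) :
    ∀ m : ℕ, ∀ z : ℕ → ℝ, (∀ i < 2 ^ m, z i ∈ I) →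
      f ((∑ i ∈ range (2 ^ m), z i) / ((2 ^ m : ℕ) : ℝ)) ≤
        (∑ i ∈ range (2 ^ m), f (z i)) / ((2 ^ m : ℕ) : ℝ) := by
  intro m
  induction m with
  | zero => intro z hz; simp
  | succ m ih =>
    intro z hz
    have hpow : (2:ℕ) ^ (m + 1) = 2 ^ m + 2 ^ m := by ring
    have hz1 : ∀ i < 2 ^ m, z i ∈ I := fun i hi =>
      hz i (lt_of_lt_of_le hi (by omega))
    have hz2 : ∀ i < 2 ^ m, z (2 ^ m + i) ∈ I := fun i hi =>
      hz _ (by omega)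
    have hu := ih z hz1
    have hv := ih (fun i => z (2 ^ m + i)) hz2
    set u : ℝ := (∑ i ∈ range (2 ^ m), z i) / ((2 ^ m : ℕ) : ℝ) with hu_def
    set v : ℝ := (∑ i ∈ range (2 ^ m), z (2 ^ m + i)) / ((2 ^ m : ℕ) : ℝ) with hv_def
    have hmem_u : u ∈ I := avg_mem I hconv _ (by positivity) z hz1
    have hmem_v : v ∈ I := avg_mem I hconv _ (by positivity) _ hz2
    have hsplit : ∑ i ∈ range (2 ^ (m + 1)), z i =
        ∑ i ∈ range (2 ^ m), z i + ∑ i ∈ range (2 ^ m), z (2 ^ m + i) := by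
      rw [hpow, Finset.sum_range_add]
    have hsplitf : ∑ i ∈ range (2 ^ (m + 1)), f (z i) =
        ∑ i ∈ range (2 ^ m), f (z i) + ∑ i ∈ range (2 ^ m), f (z (2 ^ m + i)) := by
      rw [hpow, Finset.sum_range_add]
    have h2m : (0:ℝ) < ((2 ^ m : ℕ) : ℝ) := by positivity
    have h2m' : ((2 ^ m : ℕ) : ℝ) ≠ 0 := ne_of_gt h2m
    have hcastp : ((2 ^ (m + 1) : ℕ) : ℝ) = 2 * ((2 ^ m : ℕ) : ℝ) := by
      push_cast; ring
    have hkey : (∑ i ∈ range (2 ^ (m + 1)), z i) / ((2 ^ (m + 1) : ℕ) : ℝ) = (u + v) / 2 := by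
      rw [hsplit, hu_def, hv_def, hcastp, ← add_div, div_div, mul_comm]
    calc f ((∑ i ∈ range (2 ^ (m + 1)), z i) / ((2 ^ (m + 1) : ℕ) : ℝ))
        = f ((u + v) / 2) := by rw [hkey]
      _ ≤ (f u + f v) / 2 := hJ u hmem_u v hmem_v
      _ ≤ ((∑ i ∈ range (2 ^ m), f (z i)) / ((2 ^ m : ℕ) : ℝ)
            + (∑ i ∈ range (2 ^ m), f (z (2 ^ m + i))) / ((2 ^ m : ℕ) : ℝ)) / 2 := by
            gcongr
      _ = (∑ i ∈ range (2 ^ (m + 1)), f (z i)) / ((2 ^ (m + 1) : ℕ) : ℝ) := by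
            rw [hsplitf, hcastp, ← add_div, div_div, mul_comm]

private lemma jensen_eq_weights (I : Set ℝ) (hconv : Convex ℝ I) (f : ℝ → ℝ)
    (hJ : ∀ u ∈ I, ∀ v ∈ I, f ((u + v) / 2) ≤ (f u + f v) / 2)
    (n : ℕ) (hn : 0 < n) (z : ℕ → ℝ) (hz : ∀ i < n, z i ∈ I) :
    f ((∑ i ∈ range n, z i) / n) ≤ (∑ i ∈ range n, f (z i)) / n := by
  set a : ℝ := (∑ i ∈ range n, z i) / n with ha_def
  have ha : a ∈ I := avg_mem I hconv n hn z hz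
  obtain ⟨m, hm⟩ : ∃ m, n ≤ 2 ^ m := ⟨n, (Nat.lt_two_pow_self (n := n)).le⟩
  set z' : ℕ → ℝ := fun i => if i < n then z i else a with hz'_def
  have hz' : ∀ i < 2 ^ m, z' i ∈ I := by
    intro i _
    by_cases h : i < n
    · simp [hz'_def, h, hz i h]
    · simp [hz'_def, h, ha]
  have hnR : (0:ℝ) < n := by exact_mod_cast hn
  have hnR' : (n:ℝ) ≠ 0 := ne_of_gt hnR
  have hza : ∑ i ∈ range n, z i = n * a := by
    rw [ha_def]; field_simp
  have hsum : ∑ i ∈ range (2 ^ m), z' i = ∑ i ∈ range n, z i + (((2 ^ m - n : ℕ)) : ℝ) * a := by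
    have h : (2:ℕ) ^ m = n + (2 ^ m - n) := by omega
    rw [h, Finset.sum_range_add]
    have h1 : ∀ i ∈ range n, z' i = z i := fun i hi => by
      simp [hz'_def, mem_range.mp hi]
    have h2 : ∀ i ∈ range (2 ^ m - n), z' (n + i) = a := fun i hi => by
      simp [hz'_def]
    rw [Finset.sum_congr rfl h1, Finset.sum_congr rfl h2]
    simp [Finset.sum_const, Finset.card_range, nsmul_eq_mul]
  have hsumf : ∑ i ∈ range (2 ^ m), f (z' i)
      = ∑ i ∈ range n, f (z i) + (((2 ^ m - n : ℕ)) : ℝ) * f a := by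
    have h : (2:ℕ) ^ m = n + (2 ^ m - n) := by omega
    rw [h, Finset.sum_range_add]
    have h1 : ∀ i ∈ range n, f (z' i) = f (z i) := fun i hi => by
      simp [hz'_def, mem_range.mp hi]
    have h2 : ∀ i ∈ range (2 ^ m - n), f (z' (n + i)) = f a := fun i hi => by
      simp [hz'_def]
    rw [Finset.sum_congr rfl h1, Finset.sum_congr rfl h2]
    simp [Finset.sum_const, Finset.card_range, nsmul_eq_mul]
  have h2m : (0:ℝ) < ((2 ^ m : ℕ) : ℝ) := by positivity
  have h2m' : ((2 ^ m : ℕ) : ℝ) ≠ 0 := ne_of_gt h2m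
  have hcast : (((2 ^ m - n : ℕ)) : ℝ) = ((2 ^ m : ℕ) : ℝ) - (n : ℝ) := by
    push_cast [Nat.cast_sub hm]; ring
  have havg : (∑ i ∈ range (2 ^ m), z' i) / ((2 ^ m : ℕ) : ℝ) = a := by
    rw [hsum, hza, hcast]
    have h : (n:ℝ) * a + (((2 ^ m : ℕ) : ℝ) - ↑n) * a = ((2 ^ m : ℕ) : ℝ) * a := by ring
    rw [h, mul_comm, mul_div_assoc, div_self h2m', mul_one]
  have hmain := jensen_pow2 I hconv f hJ m z' hz'
  rw [havg, hsumf, hcast] at hmain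
  -- hmain : f a ≤ (∑ f z + (2^m - n) * f a) / 2^m
  have h1 : f a * ((2 ^ m : ℕ) : ℝ) ≤
      ∑ i ∈ range n, f (z i) + (((2 ^ m : ℕ) : ℝ) - ↑n) * f a :=
    (le_div_iff₀ h2m).mp hmain
  rw [le_div_iff₀ hnR]
  linarith

theorem stmt_14 (I : Set ℝ) (hne : I.Nonempty) (hop : IsOpen I) (hconv : Convex ℝ I)
    (f : ℝ → ℝ)
    (hJ : ∀ u ∈ I, ∀ v ∈ I, f ((u + v) / 2) ≤ (f u + f v) / 2)
    (n : ℕ) (hn : 2 ≤ n) (x : Fin n → ℝ) (hx : ∀ i, x i ∈ I) :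
    f ((∑ i, x i) / n) ≤ (1 / n) * ∑ i, f (((∑ j, x j) - x i) / ((n : ℝ) - 1)) := by
  have hnR : (0:ℝ) < n := by positivity
  have hn1 : (0:ℝ) < (n:ℝ) - 1 := by
    have : (2:ℝ) ≤ n := by exact_mod_cast hn
    linarith
  set S := ∑ i, x i with hS
  set y : ℕ → ℝ := fun i =>
    if h : i < n then (S - x ⟨i, h⟩) / ((n:ℝ) - 1) else 0 with hy_def
  have hy_mem : ∀ i < n, y i ∈ I := by
    intro i hi
    have : y i = ∑ j ∈ (univ.erase ⟨i, hi⟩), ((n:ℝ) - 1)⁻¹ • x j := by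
      simp only [hy_def, dif_pos hi]
      rw [← Finset.smul_sum, Finset.sum_erase_eq_sub (mem_univ _)]
      simp [smul_eq_mul, div_eq_inv_mul, hS]
    rw [this]
    refine hconv.sum_mem (fun j _ => by positivity) ?_ (fun j _ => hx j)
    rw [Finset.sum_const, Finset.card_erase_of_mem (mem_univ _), Finset.card_univ,
      Fintype.card_fin]
    have : ((n:ℝ) - 1) ≠ 0 := ne_of_gt hn1
    rw [nsmul_eq_mul]
    push_cast [Nat.cast_sub (by omega : 1 ≤ n)]
    field_simp
  have hsum_y : ∑ i ∈ range n, y i = S := by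
    rw [Finset.sum_range fun i => y i]
    have : ∀ i : Fin n, y i = (S - x i) / ((n:ℝ) - 1) := by
      intro i; simp [hy_def, i.isLt]
    rw [Fintype.sum_congr _ _ this, ← Finset.sum_div]
    rw [Finset.sum_sub_distrib, Finset.sum_const, Finset.card_univ, Fintype.card_fin, ← hS]
    field_simp
    ring
  have hsumf_y : ∑ i ∈ range n, f (y i) = ∑ i, f ((S - x i) / ((n:ℝ) - 1)) := by
    rw [Finset.sum_range fun i => f (y i)]
    refine Fintype.sum_congr _ _ fun i => ?_
    simp [hy_def, i.isLt]
  have := jensen_eq_weights I hconv f hJ n (by omega) y hy_mem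
  rw [hsum_y, hsumf_y] at this
  rw [one_div, inv_mul_eq_div]
  exact this
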